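/- If a variable-population mechanism Φ is individually rational, weakly non-wasteful, and population-monotonic, then each school's induced choice function is substitutable: if i ∈ N ⊆ N' and i is chosen from N', then i is chosen from N. -/

import Mathlib

/-- A preference profile: each student has a (strict) preference relation over
`Option S`, where `none` is the outside option `s₀` and `some s` is school `s`. -/
abbrev Profile (N S : Type*) := N → Option S → Option S → Prop

/-- A school choice context: strict priorities and capacities for each school. -/
structure SchoolContext (N S : Type*) where
  prio : S → N → N → Prop
  prio_sto : ∀ s, IsStrictTotalOrder N (prio s)
  cap : S → ℕ
  cap_pos : ∀ s, 1 ≤ cap s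

/-- Well-formedness of a profile: each student's preference is a strict linear order. -/
def ProfWF {N S : Type*} (P : Profile N S) : Prop :=
  ∀ i, IsStrictTotalOrder (Option S) (P i)

/-- Feasibility of an assignment: capacities are respected. -/
def Feasible {N S : Type*} (C : SchoolContext N S) (μ : N → Option S) : Prop :=
  ∀ s : S, {i | μ i = some s}.ncard ≤ C.cap s

/-- Individual rationality: no student prefers the outside option to her assignment. -/
def IndRat {N S : Type*} (P : Profile N S) (μ : N → Option S) : Prop :=
  ∀ i, ¬ P i none (μ i)

/-- Non-wastefulness: no student prefers a school with an unfilled seat. -/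
def NonWasteful {N S : Type*} (C : SchoolContext N S) (P : Profile N S)
    (μ : N → Option S) : Prop :=
  ∀ i (s : S), P i (some s) (μ i) → C.cap s ≤ {j | μ j = some s}.ncard

/-- No justified envy. -/
def NoJustifiedEnvy {N S : Type*} (C : SchoolContext N S) (P : Profile N S)
    (μ : N → Option S) : Prop :=
  ∀ i j (s : S), P i (some s) (μ i) → μ j = some s → ¬ C.prio s i j

/-- Stability of a matching. -/
def IsStable {N S : Type*} (C : SchoolContext N S) (P : Profile N S)
    (μ : N → Option S) : Prop :=
  Feasible C μ ∧ IndRat P μ ∧ NonWasteful C P μ ∧ NoJustifiedEnvy C P μ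

/-- Feasibility with respect to capacities `q`. -/
def FeasibleQ {NN S : Type*} (q : S → ℕ) (μ : NN → Option S) : Prop :=
  ∀ s : S, {i | μ i = some s}.ncard ≤ q s

/-- Students outside the present population are unassigned. -/
def VOutside {NN S : Type*} (Φ : Finset NN → Profile NN S → (NN → Option S)) : Prop :=
  ∀ (Nf : Finset NN) (P : Profile NN S) (i : NN), i ∉ Nf → Φ Nf P i = none

/-- The mechanism always outputs feasible matchings. -/
def VFeasible {NN S : Type*} (q : S → ℕ)
    (Φ : Finset NN → Profile NN S → (NN → Option S)) : Prop :=
  ∀ (Nf : Finset NN) (P : Profile NN S), ProfWF P → FeasibleQ q (Φ Nf P)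

/-- Two preference relations have the same ranking of admissible schools. -/
def TruncEq {S : Type*} (p p' : Option S → Option S → Prop) : Prop :=
  (∀ s : S, p (some s) none ↔ p' (some s) none) ∧
  (∀ s s' : S, p (some s) none → p (some s') none →
      (p (some s) (some s') ↔ p' (some s) (some s')))

/-- The mechanism depends only on students' rankings of admissible schools. -/
def VInvariant {NN S : Type*} (Φ : Finset NN → Profile NN S → (NN → Option S)) : Prop :=
  ∀ (Nf : Finset NN) (P P' : Profile NN S), ProfWF P → ProfWF P' →
    (∀ i ∈ Nf, TruncEq (P i) (P' i)) → Φ Nf P = Φ Nf P'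

/-- Individual rationality. -/
def VIndRat {NN S : Type*} (Φ : Finset NN → Profile NN S → (NN → Option S)) : Prop :=
  ∀ (Nf : Finset NN) (P : Profile NN S), ProfWF P → ∀ i, ¬ P i none (Φ Nf P i)

/-- Weak non-wastefulness: an unassigned student never prefers a school with empty seats. -/
def VWNW {NN S : Type*} (q : S → ℕ)
    (Φ : Finset NN → Profile NN S → (NN → Option S)) : Prop :=
  ∀ (Nf : Finset NN) (P : Profile NN S), ProfWF P → ∀ i ∈ Nf, ∀ s : S,
    Φ Nf P i = none → P i (some s) none → q s ≤ {j | Φ Nf P j = some s}.ncard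

/-- Population-monotonicity. -/
def VPopMono {NN S : Type*} (Φ : Finset NN → Profile NN S → (NN → Option S)) : Prop :=
  ∀ (Nf Nf' : Finset NN), Nf ⊆ Nf' → ∀ (P : Profile NN S), ProfWF P →
    ∀ i ∈ Nf, ¬ P i (Φ Nf' P i) (Φ Nf P i)

/-- Strategy-proofness. -/
def VSP {NN S : Type*} [DecidableEq NN]
    (Φ : Finset NN → Profile NN S → (NN → Option S)) : Prop :=
  ∀ (Nf : Finset NN) (P : Profile NN S), ProfWF P →
    ∀ (i : NN) (P'i : Option S → Option S → Prop),
      ProfWF (Function.update P i P'i) →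
      ¬ P i (Φ Nf (Function.update P i P'i) i) (Φ Nf P i)

/-- Weak local non-bossiness: restricted to real schools. -/
def VWLNB {NN S : Type*} [DecidableEq NN]
    (Φ : Finset NN → Profile NN S → (NN → Option S)) : Prop :=
  ∀ (Nf : Finset NN) (P : Profile NN S), ProfWF P →
    ∀ (i : NN) (P'i : Option S → Option S → Prop),
      ProfWF (Function.update P i P'i) → ∀ s : S,
      Φ Nf P i = some s → Φ Nf (Function.update P i P'i) i = some s →
      {j | Φ Nf P j = some s} = {j | Φ Nf (Function.update P i P'i) j = some s}

/-- Under `P` every student finds only school `s` admissible. -/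
def AdmOnly {NN S : Type*} (P : Profile NN S) (s : S) : Prop :=
  ∀ k, P k (some s) none ∧ ∀ s' : S, s' ≠ s → ¬ P k (some s') none

/-- The S-weaker axiom of revealed preference. -/
def SWrARP {NN S : Type*} (q : S → ℕ)
    (Φ : Finset NN → Profile NN S → (NN → Option S)) : Prop :=
  ∀ (s : S) (i j : NN) (Nf Nf' : Finset NN),
    i ∈ Nf → i ∈ Nf' → j ∈ Nf → j ∈ Nf' →
    Nf.card = q s + 1 → Nf'.card = q s + 1 →
    ∀ P : Profile NN S, ProfWF P → AdmOnly P s →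
      Φ Nf P i = some s → Φ Nf' P j = some s → Φ Nf P j ≠ some s →
      Φ Nf' P i = some s

/-- Stability of `μ` for the subpopulation `Nf`, priorities `pr`, capacities `q`. -/
def IsStableOn {NN S : Type*} (pr : S → NN → NN → Prop) (q : S → ℕ)
    (Nf : Finset NN) (P : Profile NN S) (μ : NN → Option S) : Prop :=
  (∀ i, i ∉ Nf → μ i = none) ∧ FeasibleQ q μ ∧
  (∀ i ∈ Nf, ¬ P i none (μ i)) ∧
  (∀ i ∈ Nf, ∀ s : S, P i (some s) (μ i) → q s ≤ {j | μ j = some s}.ncard) ∧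
  (∀ i ∈ Nf, ∀ j ∈ Nf, ∀ s : S, P i (some s) (μ i) → μ j = some s → ¬ pr s i j)

/-- `Φ` is the student-proposing deferred acceptance mechanism for priorities `pr`:
for every population and well-formed profile it outputs the student-optimal stable
matching of the restricted problem. -/
def IsDAFor {NN S : Type*} (pr : S → NN → NN → Prop) (q : S → ℕ)
    (Φ : Finset NN → Profile NN S → (NN → Option S)) : Prop :=
  ∀ (Nf : Finset NN) (P : Profile NN S), ProfWF P →
    IsStableOn pr q Nf P (Φ Nf P) ∧
    ∀ μ, IsStableOn pr q Nf P μ → ∀ i ∈ Nf, ¬ P i (μ i) (Φ Nf P i)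

/-- If a variable-population mechanism is individually rational, weakly non-wasteful,
and population-monotonic, then each school's induced choice function is substitutable:
if `i ∈ Nf ⊆ Nf'` and `i` is chosen from `Nf'`, then `i` is chosen from `Nf`. -/
theorem stmt11 {NN S : Type*} [Finite NN] [DecidableEq NN]
    (q : S → ℕ) (hq : ∀ s, 1 ≤ q s)
    (Φ : Finset NN → Profile NN S → (NN → Option S))
    (hout : VOutside Φ) (hfeas : VFeasible q Φ)
    (hIR : VIndRat Φ) (hWNW : VWNW q Φ) (hPM : VPopMono Φ) :
    ∀ (s : S) (P : Profile NN S), ProfWF P → AdmOnly P s →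
      ∀ (Nf Nf' : Finset NN), Nf ⊆ Nf' → ∀ i ∈ Nf,
        Φ Nf' P i = some s → Φ Nf P i = some s := by
  intro s P hwf hadm Nf Nf' hsub i hi hi'
  have hpm := hPM Nf Nf' hsub P hwf i hi
  rw [hi'] at hpm
  cases hx : Φ Nf P i with
  | none =>
    rw [hx] at hpm
    exact absurd (hadm i).1 hpm
  | some s' =>
    rcases eq_or_ne s' s with rfl | hne
    · rfl
    · rcases (haveI := hwf i; trichotomous_of (P i) (some s') none) with h | h | h
      · exact absurd h ((hadm i).2 s' hne)
      · exact absurd h (by simp)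
      · have := hIR Nf P hwf i
        rw [hx] at this
        exact absurd h this
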